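/- Let P₁ and P₂ be probability measures on ℝ such that H = F_{P₁} − F_{P₂} lies in L¹(ℝ) ∩ L²(ℝ), and let Ĥ denote its Fourier transform in the symmetric convention. Then for every ε > 0, (1/(2π)) ∫_ℝ |φ_{P₁}(ω) − φ_{P₂}(ω)|² / (ω² + ε) dω = ∫_ℝ (ω² / (ω² + ε)) |Ĥ(ω)|² dω; that is, the regularised spectral Hilbert distance between the embeddings φ_{P_i} − 1 coincides with the regularised CDF-level Hilbert distance between F_{P₁} and F_{P₂}. -/

import Mathlib

open MeasureTheory Filter

/-- The cumulative distribution function of a measure on `ℝ`. -/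
noncomputable def cdfFn (P : Measure ℝ) (x : ℝ) : ℝ := (P (Set.Iic x)).toReal

/-- The characteristic function `φ_P(ω) = ∫ e^{iωx} dP(x)`. -/
noncomputable def charFn (P : Measure ℝ) (ω : ℝ) : ℂ :=
  ∫ x, Complex.exp (Complex.I * (ω : ℂ) * (x : ℂ)) ∂P

/-- The Fourier transform with the symmetric convention
`f̂(ω) = (1/√(2π)) ∫ f(x) e^{-iωx} dx`, for a real-valued function. -/
noncomputable def fourierSym (f : ℝ → ℝ) (ω : ℝ) : ℂ :=
  ((Real.sqrt (2 * Real.pi) : ℂ))⁻¹ *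
    ∫ x : ℝ, (f x : ℂ) * Complex.exp (-(Complex.I * (ω : ℂ) * (x : ℂ)))

namespace RegSpecAux

open Set Complex

/-- The oscillating kernel `e^{iωt}`. -/
noncomputable def eker (ω t : ℝ) : ℂ := Complex.exp (Complex.I * (ω : ℂ) * (t : ℂ))

lemma cont_eker (ω : ℝ) : Continuous (eker ω) := by
  unfold eker; fun_prop

lemma norm_eker (ω t : ℝ) : ‖eker ω t‖ = 1 := by
  unfold eker
  have h : Complex.I * (ω : ℂ) * (t : ℂ) = ((ω * t : ℝ) : ℂ) * Complex.I := by
    push_cast; ring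
  rw [h, Complex.norm_exp_ofReal_mul_I]

/-- Clamp to `[-n, n]`. -/
noncomputable def clampN (n : ℕ) (x : ℝ) : ℝ := max (-(n : ℝ)) (min x n)

lemma continuous_clampN (n : ℕ) : Continuous (clampN n) := by
  unfold clampN; fun_prop

lemma clampN_le (n : ℕ) (x : ℝ) : clampN n x ≤ (n : ℝ) := by
  unfold clampN
  have h1 : -(n : ℝ) ≤ n := by
    have : (0:ℝ) ≤ n := Nat.cast_nonneg n
    linarith
  exact max_le h1 (min_le_right _ _)

lemma neg_le_clampN (n : ℕ) (x : ℝ) : -(n : ℝ) ≤ clampN n x := le_max_left _ _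

lemma clampN_eq (n : ℕ) (x : ℝ) (h : |x| ≤ n) : clampN n x = x := by
  rw [abs_le] at h
  unfold clampN
  rw [min_eq_left h.2, max_eq_right h.1]

lemma exp_clamp_sub_one (ω y : ℝ) :
    eker ω y - 1 = (Complex.I * (ω : ℂ)) * ∫ t in (0:ℝ)..y, eker ω t := by
  by_cases hω : ω = 0
  · subst hω; simp [eker]
  · have hc : (Complex.I * (ω : ℂ)) ≠ 0 :=
      mul_ne_zero Complex.I_ne_zero (Complex.ofReal_ne_zero.mpr hω)
    have : ∫ t in (0:ℝ)..y, eker ω t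
        = (Complex.exp (Complex.I * (ω:ℂ) * (y:ℂ)) - Complex.exp (Complex.I * (ω:ℂ) * ((0:ℝ):ℂ)))
            / (Complex.I * (ω:ℂ)) := by
      exact integral_exp_mul_complex hc
    rw [this]
    simp only [Complex.ofReal_zero, mul_zero, Complex.exp_zero]
    rw [mul_div_cancel₀ _ hc]
    rfl

lemma interval_eq_ind (ω y : ℝ) :
    (∫ t in (0:ℝ)..y, eker ω t) =
      ∫ t : ℝ, ((Ico (0:ℝ) y).indicator (eker ω) t - (Ico y (0:ℝ)).indicator (eker ω) t) := by
  rcases le_or_gt 0 y with h | h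
  · have he : Ico y (0:ℝ) = ∅ := Ico_eq_empty (not_lt.mpr h)
    rw [intervalIntegral.integral_of_le h, integral_Ioc_eq_integral_Ioo,
      ← integral_Ico_eq_integral_Ioo, ← integral_indicator measurableSet_Ico]
    simp [he]
  · have he : Ico (0:ℝ) y = ∅ := Ico_eq_empty (not_lt.mpr h.le)
    rw [intervalIntegral.integral_of_ge h.le, integral_Ioc_eq_integral_Ioo,
      ← integral_Ico_eq_integral_Ioo, ← integral_indicator measurableSet_Ico]
    rw [he]
    simp [integral_neg]

/-- The product-space kernel. -/
noncomputable def Gk (ω : ℝ) (n : ℕ) (p : ℝ × ℝ) : ℂ :=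
  (Ico (0:ℝ) (clampN n p.1)).indicator (eker ω) p.2
    - (Ico (clampN n p.1) (0:ℝ)).indicator (eker ω) p.2

lemma measurable_Gk (ω : ℝ) (n : ℕ) : Measurable (Gk ω n) := by
  have hS1 : MeasurableSet {p : ℝ × ℝ | 0 ≤ p.2 ∧ p.2 < clampN n p.1} := by
    apply MeasurableSet.inter
    · exact measurableSet_le measurable_const measurable_snd
    · exact measurableSet_lt measurable_snd
        ((continuous_clampN n).measurable.comp measurable_fst)
  have hS2 : MeasurableSet {p : ℝ × ℝ | clampN n p.1 ≤ p.2 ∧ p.2 < 0} := by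
    apply MeasurableSet.inter
    · exact measurableSet_le ((continuous_clampN n).measurable.comp measurable_fst)
        measurable_snd
    · exact measurableSet_lt measurable_snd measurable_const
  have hg : Measurable fun p : ℝ × ℝ => eker ω p.2 :=
    (cont_eker ω).measurable.comp measurable_snd
  have heq : Gk ω n = fun p : ℝ × ℝ =>
      ({p : ℝ × ℝ | 0 ≤ p.2 ∧ p.2 < clampN n p.1}.indicator (fun p => eker ω p.2) p)
        - ({p : ℝ × ℝ | clampN n p.1 ≤ p.2 ∧ p.2 < 0}.indicator (fun p => eker ω p.2) p) := by
    funext p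
    simp only [Gk, Set.indicator_apply, Set.mem_Ico, Set.mem_setOf_eq]
  rw [heq]
  exact (hg.indicator hS1).sub (hg.indicator hS2)

lemma integrable_Gk (P : Measure ℝ) [IsProbabilityMeasure P] (ω : ℝ) (n : ℕ) :
    Integrable (Gk ω n) (P.prod volume) := by
  have hbd : Integrable
      (fun p : ℝ × ℝ => ((Set.univ : Set ℝ) ×ˢ Set.Icc (-(n:ℝ)) n).indicator
        (fun _ => (1:ℝ)) p) (P.prod volume) := by
    rw [integrable_indicator_iff (MeasurableSet.univ.prod measurableSet_Icc)]
    apply (integrableOn_const_iff (C := (1:ℝ))).mpr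
    right
    rw [Measure.prod_prod, measure_univ, one_mul]
    exact measure_Icc_lt_top
  refine hbd.mono' (measurable_Gk ω n).aestronglyMeasurable (ae_of_all _ fun p => ?_)
  by_cases h1 : p.2 ∈ Ico (0:ℝ) (clampN n p.1)
  · have h2 : p.2 ∉ Ico (clampN n p.1) (0:ℝ) := by
      intro h2
      exact absurd (lt_of_le_of_lt h1.1 h2.2) (lt_irrefl 0)
    have hmem : p ∈ (Set.univ : Set ℝ) ×ˢ Set.Icc (-(n:ℝ)) n := by
      refine ⟨trivial, ?_, ?_⟩
      · have : (0:ℝ) ≤ (n:ℝ) := Nat.cast_nonneg n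
        linarith [h1.1]
      · exact le_trans h1.2.le (clampN_le n p.1)
    simp only [Gk, Set.indicator_of_mem h1, Set.indicator_of_notMem h2, sub_zero,
      Set.indicator_of_mem hmem]
    rw [norm_eker]
  · by_cases h2 : p.2 ∈ Ico (clampN n p.1) (0:ℝ)
    · have hmem : p ∈ (Set.univ : Set ℝ) ×ˢ Set.Icc (-(n:ℝ)) n := by
        refine ⟨trivial, le_trans (neg_le_clampN n p.1) h2.1, ?_⟩
        have : (0:ℝ) ≤ (n:ℝ) := Nat.cast_nonneg n
        linarith [h2.2]
      simp only [Gk, Set.indicator_of_mem h2, Set.indicator_of_notMem h1, zero_sub,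
        Set.indicator_of_mem hmem]
      rw [norm_neg, norm_eker]
    · simp only [Gk, Set.indicator_of_notMem h1, Set.indicator_of_notMem h2, sub_zero,
        norm_zero]
      exact Set.indicator_nonneg (fun _ _ => zero_le_one) p

/-- The inner integral after Fubini. -/
noncomputable def innerP (P : Measure ℝ) (ω : ℝ) (n : ℕ) (t : ℝ) : ℂ :=
  if 0 ≤ t ∧ t < (n : ℝ) then ((P (Set.Ioi t)).toReal : ℂ) * eker ω t
  else if -(n : ℝ) ≤ t ∧ t < 0 then -(((P (Set.Iic t)).toReal : ℂ) * eker ω t) else 0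

lemma inner_int (P : Measure ℝ) [IsProbabilityMeasure P] (ω : ℝ) (n : ℕ) (t : ℝ) :
    (∫ x, Gk ω n (x, t) ∂P) = innerP P ω n t := by
  have hn0 : (0:ℝ) ≤ (n:ℝ) := Nat.cast_nonneg n
  by_cases h1 : 0 ≤ t ∧ t < (n:ℝ)
  · have hx : ∀ x : ℝ, Gk ω n (x, t) = (Set.Ioi t).indicator (fun _ => eker ω t) x := by
      intro x
      have hnot : t ∉ Ico (clampN n x) (0:ℝ) := fun hm => absurd (lt_of_le_of_lt h1.1 hm.2) (lt_irrefl 0)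
      by_cases hxt : t < x
      · have hmem : t ∈ Ico (0:ℝ) (clampN n x) :=
          ⟨h1.1, lt_max_iff.mpr (Or.inr (lt_min hxt h1.2))⟩
        simp [Gk, Set.indicator_of_mem hmem, Set.indicator_of_notMem hnot,
          Set.indicator_of_mem (show x ∈ Set.Ioi t from hxt)]
      · have hmem : t ∉ Ico (0:ℝ) (clampN n x) := by
          intro hm
          rcases lt_max_iff.mp hm.2 with h | h
          · linarith [h1.1]
          · exact hxt (lt_min_iff.mp h).1
        simp [Gk, Set.indicator_of_notMem hmem, Set.indicator_of_notMem hnot,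
          Set.indicator_of_notMem (show x ∉ Set.Ioi t from hxt)]
    rw [show (fun x => Gk ω n (x, t)) = fun x => (Set.Ioi t).indicator (fun _ => eker ω t) x from funext hx]
    rw [integral_indicator_const _ measurableSet_Ioi]
    rw [innerP, if_pos h1]
    rw [Complex.real_smul]
    rfl
  · by_cases h2 : -(n:ℝ) ≤ t ∧ t < 0
    · have hx : ∀ x : ℝ, Gk ω n (x, t) = -((Set.Iic t).indicator (fun _ => eker ω t) x) := by
        intro x
        have hnot : t ∉ Ico (0:ℝ) (clampN n x) := fun hm => absurd (lt_of_le_of_lt hm.1 h2.2) (lt_irrefl 0)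
        by_cases hxt : x ≤ t
        · have hmem : t ∈ Ico (clampN n x) (0:ℝ) := by
            refine ⟨max_le h2.1 (le_trans (min_le_left _ _) hxt), h2.2⟩
          simp [Gk, Set.indicator_of_mem hmem, Set.indicator_of_notMem hnot,
            Set.indicator_of_mem (show x ∈ Set.Iic t from hxt)]
        · have hmem : t ∉ Ico (clampN n x) (0:ℝ) := by
            intro hm
            rcases min_le_iff.mp (max_le_iff.mp hm.1).2 with h | h
            · exact hxt h
            · linarith [h2.2]
          simp [Gk, Set.indicator_of_notMem hmem, Set.indicator_of_notMem hnot,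
            Set.indicator_of_notMem (show x ∉ Set.Iic t from hxt)]
      rw [show (fun x => Gk ω n (x, t)) = fun x => -((Set.Iic t).indicator (fun _ => eker ω t) x) from funext hx]
      rw [integral_neg, integral_indicator_const _ measurableSet_Iic]
      rw [innerP, if_neg h1, if_pos h2]
      rw [Complex.real_smul]
      rfl
    · have hx : ∀ x : ℝ, Gk ω n (x, t) = 0 := by
        intro x
        have hnot1 : t ∉ Ico (0:ℝ) (clampN n x) := by
          intro hm
          have h3 : t < (n:ℝ) := lt_of_lt_of_le hm.2 (clampN_le n x)
          exact h1 ⟨hm.1, h3⟩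
        have hnot2 : t ∉ Ico (clampN n x) (0:ℝ) := by
          intro hm
          have h3 : -(n:ℝ) ≤ t := le_trans (neg_le_clampN n x) hm.1
          exact h2 ⟨h3, hm.2⟩
        simp [Gk, Set.indicator_of_notMem hnot1, Set.indicator_of_notMem hnot2]
      rw [show (fun x => Gk ω n (x, t)) = fun _ => (0:ℂ) from funext hx]
      rw [integral_const]
      rw [innerP, if_neg h1, if_neg h2]
      simp

lemma fubini_P (P : Measure ℝ) [IsProbabilityMeasure P] (ω : ℝ) (n : ℕ) :
    (∫ x, (eker ω (clampN n x) - 1) ∂P)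
      = (Complex.I * (ω : ℂ)) * ∫ t : ℝ, innerP P ω n t := by
  have h1 : ∀ x : ℝ, eker ω (clampN n x) - 1
      = (Complex.I * (ω:ℂ)) * ∫ t : ℝ, Gk ω n (x, t) := by
    intro x
    rw [exp_clamp_sub_one ω (clampN n x), interval_eq_ind]
    rfl
  calc (∫ x, (eker ω (clampN n x) - 1) ∂P)
      = ∫ x, ((Complex.I * (ω:ℂ)) * ∫ t : ℝ, Gk ω n (x, t)) ∂P :=
        integral_congr_ae (ae_of_all _ h1)
    _ = (Complex.I * (ω:ℂ)) * ∫ x, (∫ t : ℝ, Gk ω n (x, t)) ∂P := integral_const_mul _ _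
    _ = (Complex.I * (ω:ℂ)) * ∫ t : ℝ, ∫ x, Gk ω n (x, t) ∂P := by
        congr 1
        exact integral_integral_swap (integrable_Gk P ω n)
    _ = (Complex.I * (ω:ℂ)) * ∫ t : ℝ, innerP P ω n t := by
        congr 1
        exact integral_congr_ae (ae_of_all _ (inner_int P ω n))

lemma innerP_integrable (P : Measure ℝ) [IsProbabilityMeasure P] (ω : ℝ) (n : ℕ) :
    Integrable (innerP P ω n) volume := by
  have h := (integrable_Gk P ω n).integral_prod_right
  exact h.congr (Eventually.of_forall fun t => inner_int P ω n t)

lemma diff_eq (P₁ P₂ : Measure ℝ) [IsProbabilityMeasure P₁] [IsProbabilityMeasure P₂]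
    (H : ℝ → ℝ) (hH : ∀ x, H x = cdfFn P₁ x - cdfFn P₂ x) (ω : ℝ) (n : ℕ) :
    (∫ x, (eker ω (clampN n x) - 1) ∂P₁) - (∫ x, (eker ω (clampN n x) - 1) ∂P₂)
      = -(Complex.I * (ω : ℂ)) *
          ∫ t : ℝ, (Ico (-(n:ℝ)) (n:ℝ)).indicator (fun t => (H t : ℂ) * eker ω t) t := by
  have hn0 : (0:ℝ) ≤ (n:ℝ) := Nat.cast_nonneg n
  have hIoi : ∀ (P : Measure ℝ) [IsProbabilityMeasure P] (t : ℝ),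
      (P (Set.Ioi t)).toReal = 1 - (P (Set.Iic t)).toReal := by
    intro P hP t
    have h := measure_compl (measurableSet_Iic (a := t)) (measure_ne_top P _)
    rw [Set.compl_Iic] at h
    rw [h, measure_univ, ENNReal.toReal_sub_of_le prob_le_one ENNReal.one_ne_top,
      ENNReal.toReal_one]
  have hpt : ∀ t : ℝ, innerP P₁ ω n t - innerP P₂ ω n t
      = -((Ico (-(n:ℝ)) (n:ℝ)).indicator (fun t => (H t : ℂ) * eker ω t) t) := by
    intro t
    by_cases h1 : 0 ≤ t ∧ t < (n:ℝ)
    · have hmem : t ∈ Ico (-(n:ℝ)) (n:ℝ) := ⟨by linarith [h1.1], h1.2⟩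
      rw [innerP, innerP, if_pos h1, if_pos h1, Set.indicator_of_mem hmem]
      rw [hIoi P₁, hIoi P₂, hH t, cdfFn, cdfFn]
      push_cast
      ring
    · by_cases h2 : -(n:ℝ) ≤ t ∧ t < 0
      · have hmem : t ∈ Ico (-(n:ℝ)) (n:ℝ) := ⟨h2.1, by linarith [h2.2]⟩
        rw [innerP, innerP, if_neg h1, if_neg h1, if_pos h2, if_pos h2,
          Set.indicator_of_mem hmem]
        rw [hH t, cdfFn, cdfFn]
        push_cast
        ring
      · have hmem : t ∉ Ico (-(n:ℝ)) (n:ℝ) := by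
          intro hm
          rcases le_or_gt 0 t with h | h
          · exact h1 ⟨h, hm.2⟩
          · exact h2 ⟨hm.1, h⟩
        rw [innerP, innerP, if_neg h1, if_neg h1, if_neg h2, if_neg h2,
          Set.indicator_of_notMem hmem]
        simp
  rw [fubini_P P₁ ω n, fubini_P P₂ ω n, ← mul_sub,
    ← integral_sub (innerP_integrable P₁ ω n) (innerP_integrable P₂ ω n)]
  rw [integral_congr_ae (ae_of_all _ hpt), integral_neg]
  ring

lemma key (P₁ P₂ : Measure ℝ) [IsProbabilityMeasure P₁] [IsProbabilityMeasure P₂]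
    (H : ℝ → ℝ) (hH : ∀ x, H x = cdfFn P₁ x - cdfFn P₂ x)
    (hL1 : MemLp H 1 (volume : Measure ℝ)) (ω : ℝ) :
    charFn P₁ ω - charFn P₂ ω
      = -(Complex.I * (ω : ℂ)) * ∫ t : ℝ, (H t : ℂ) * eker ω t := by
  have hHi : Integrable H volume := memLp_one_iff_integrable.mp hL1
  have hHc : Integrable (fun t => (H t : ℂ) * eker ω t) volume := by
    have h1 : Integrable (fun t => (H t : ℂ)) volume := hHi.ofReal
    have h2 := h1.bdd_mul (f := eker ω) (c := 1) ((cont_eker ω).aestronglyMeasurable)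
      (ae_of_all _ fun t => le_of_eq (norm_eker ω t))
    exact h2.congr (ae_of_all _ fun t => mul_comm (eker ω t) ((H t : ℂ)))
  have hcint : ∀ (P : Measure ℝ) [IsProbabilityMeasure P], Integrable (fun x => eker ω x) P := by
    intro P _
    exact (integrable_const (1:ℝ)).mono' ((cont_eker ω).aestronglyMeasurable)
      (ae_of_all _ fun x => le_of_eq (norm_eker ω x))
  have hval : ∀ (P : Measure ℝ) [IsProbabilityMeasure P],
      (∫ x, (eker ω x - 1) ∂P) = charFn P ω - 1 := by
    intro P _
    rw [integral_sub (hcint P) (integrable_const _), integral_const]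
    simp [charFn, eker]
  have hseq : ∀ (P : Measure ℝ) [IsProbabilityMeasure P],
      Tendsto (fun nn : ℕ => ∫ x, (eker ω (clampN nn x) - 1) ∂P) atTop
        (nhds (charFn P ω - 1)) := by
    intro P _
    have hm : ∀ nn : ℕ, AEStronglyMeasurable (fun x => eker ω (clampN nn x) - 1) P :=
      fun nn => (((cont_eker ω).comp (continuous_clampN nn)).sub
        continuous_const).aestronglyMeasurable
    have hb : ∀ nn : ℕ, ∀ᵐ x ∂P, ‖eker ω (clampN nn x) - 1‖ ≤ (2:ℝ) := by
      intro nn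
      refine ae_of_all _ fun x => ?_
      calc ‖eker ω (clampN nn x) - 1‖ ≤ ‖eker ω (clampN nn x)‖ + ‖(1:ℂ)‖ := norm_sub_le _ _
        _ = 2 := by rw [norm_eker]; norm_num
    have hlim : ∀ᵐ x ∂P, Tendsto (fun nn : ℕ => eker ω (clampN nn x) - 1) atTop
        (nhds (eker ω x - 1)) := by
      refine ae_of_all _ fun x => ?_
      apply tendsto_const_nhds.congr'
      obtain ⟨N, hN⟩ := exists_nat_ge |x|
      filter_upwards [eventually_ge_atTop N] with nn hnn
      rw [clampN_eq nn x (le_trans hN (by exact_mod_cast hnn))]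
    have hdc := tendsto_integral_of_dominated_convergence (fun _ => (2:ℝ)) hm
      (integrable_const _) hb hlim
    rw [hval P] at hdc
    exact hdc
  have t1 : Tendsto (fun nn : ℕ => (∫ x, (eker ω (clampN nn x) - 1) ∂P₁)
      - ∫ x, (eker ω (clampN nn x) - 1) ∂P₂) atTop
      (nhds ((charFn P₁ ω - 1) - (charFn P₂ ω - 1))) := (hseq P₁).sub (hseq P₂)
  have t2 : Tendsto (fun nn : ℕ => -(Complex.I * (ω:ℂ)) *
      ∫ t : ℝ, (Ico (-(nn:ℝ)) (nn:ℝ)).indicator (fun t => (H t : ℂ) * eker ω t) t) atTop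
      (nhds (-(Complex.I * (ω:ℂ)) * ∫ t : ℝ, (H t : ℂ) * eker ω t)) := by
    apply Tendsto.const_mul
    refine tendsto_integral_of_dominated_convergence (fun t => ‖H t‖)
      (fun nn => hHc.aestronglyMeasurable.indicator measurableSet_Ico) hHi.norm
      (fun nn => ae_of_all _ fun t => ?_) (ae_of_all _ fun t => ?_)
    · calc ‖(Ico (-(nn:ℝ)) (nn:ℝ)).indicator (fun t => (H t : ℂ) * eker ω t) t‖
          ≤ ‖(H t : ℂ) * eker ω t‖ := norm_indicator_le_norm_self _ _
        _ = ‖H t‖ := by rw [norm_mul, norm_eker, mul_one, Complex.norm_real]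
    · apply tendsto_const_nhds.congr'
      obtain ⟨N, hN⟩ := exists_nat_ge (|t| + 1)
      filter_upwards [eventually_ge_atTop N] with nn hnn
      have hnn' : |t| + 1 ≤ (nn:ℝ) := le_trans hN (by exact_mod_cast hnn)
      have habs := abs_le.mp (le_of_lt (lt_of_lt_of_le (lt_add_one |t|) hnn'))
      have hmem : t ∈ Ico (-(nn:ℝ)) (nn:ℝ) := by
        constructor
        · linarith [habs.1]
        · linarith [le_abs_self t]
      rw [Set.indicator_of_mem hmem]
  have heq : ∀ nn : ℕ, (∫ x, (eker ω (clampN nn x) - 1) ∂P₁)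
      - (∫ x, (eker ω (clampN nn x) - 1) ∂P₂)
      = -(Complex.I * (ω:ℂ)) *
          ∫ t : ℝ, (Ico (-(nn:ℝ)) (nn:ℝ)).indicator (fun t => (H t : ℂ) * eker ω t) t :=
    fun nn => diff_eq P₁ P₂ H hH ω nn
  have huniq := tendsto_nhds_unique (t1.congr heq) t2
  calc charFn P₁ ω - charFn P₂ ω = (charFn P₁ ω - 1) - (charFn P₂ ω - 1) := by ring
    _ = -(Complex.I * (ω : ℂ)) * ∫ t : ℝ, (H t : ℂ) * eker ω t := huniq

end RegSpecAux

/-- **Regularised spectral distance equals the regularised CDF-level distance.**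
If `H = F_{P₁} - F_{P₂} ∈ L¹(ℝ) ∩ L²(ℝ)`, then for every `ε > 0`,
`(1/(2π)) ∫ |φ_{P₁}(ω) - φ_{P₂}(ω)|² / (ω² + ε) dω = ∫ (ω²/(ω² + ε)) |Ĥ(ω)|² dω`. -/
theorem regSpectral_eq_regCdf
    (P₁ P₂ : Measure ℝ) [IsProbabilityMeasure P₁] [IsProbabilityMeasure P₂]
    (H : ℝ → ℝ) (hH : ∀ x, H x = cdfFn P₁ x - cdfFn P₂ x)
    (hL1 : MemLp H 1 (volume : Measure ℝ)) (hL2 : MemLp H 2 (volume : Measure ℝ)) :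
    ∀ ε : ℝ, 0 < ε →
      (1 / (2 * Real.pi)) *
          (∫ ω : ℝ, (‖charFn P₁ ω - charFn P₂ ω‖) ^ 2 / (ω ^ 2 + ε)) =
        ∫ ω : ℝ, (ω ^ 2 / (ω ^ 2 + ε)) * (‖fourierSym H ω‖) ^ 2 := by
  intro ε hε
  have hπ : (0:ℝ) < 2 * Real.pi := by positivity
  rw [← integral_const_mul]
  refine integral_congr_ae (ae_of_all _ fun ω => ?_)
  beta_reduce
  set g : ℂ := ∫ t : ℝ, (H t : ℂ) * RegSpecAux.eker ω t with hg
  have hdiff : charFn P₁ ω - charFn P₂ ω = -(Complex.I * (ω:ℂ)) * g :=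
    RegSpecAux.key P₁ P₂ H hH hL1 ω
  have hfour : fourierSym H ω = ((Real.sqrt (2*Real.pi) : ℂ))⁻¹ * (starRingEnd ℂ) g := by
    rw [fourierSym, hg, ← integral_conj]
    congr 1
    refine integral_congr_ae (ae_of_all _ fun x => ?_)
    beta_reduce
    rw [map_mul, Complex.conj_ofReal]
    simp only [RegSpecAux.eker]
    rw [← Complex.exp_conj]
    congr 2
    simp [map_mul, Complex.conj_I, Complex.conj_ofReal]
  have habsdiff : ‖charFn P₁ ω - charFn P₂ ω‖ = |ω| * ‖g‖ := by
    rw [hdiff, neg_mul, norm_neg, norm_mul, norm_mul, Complex.norm_I, Complex.norm_real,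
      Real.norm_eq_abs, one_mul]
  have habsf : ‖fourierSym H ω‖
      = (Real.sqrt (2*Real.pi))⁻¹ * ‖g‖ := by
    rw [hfour, norm_mul, Complex.norm_conj, norm_inv, Complex.norm_real,
      Real.norm_of_nonneg (Real.sqrt_nonneg _)]
  rw [habsdiff, habsf]
  have hsq : Real.sqrt (2*Real.pi) ^ 2 = 2 * Real.pi := Real.sq_sqrt hπ.le
  have hωε : (0:ℝ) < ω^2 + ε := by positivity
  rw [mul_pow, mul_pow, sq_abs, inv_pow, hsq]
  field_simp
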